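/- Let W be a connected graphon, i.e., there is no Lebesgue-measurable set A ⊆ [0,1] with 0 < m(A) < 1 such that W = 0 a.e. on A × ([0,1] ∖ A). Let f ∈ L²[0,1] with ‖f‖₂ = 1 be a μ(W)-eigenfunction of W, that is, ∫₀¹ W(x,y)f(y) dy = μ(W)·f(x) for a.e. x. Then f has constant sign almost everywhere: either f > 0 a.e. on [0,1] or f < 0 a.e. on [0,1]. -/

import Mathlib

open MeasureTheory

/-- Lebesgue measure restricted to the unit square `[0,1]²`. -/
noncomputable def unitSq : Measure (ℝ × ℝ) :=
  volume.restrict (Set.Icc (0 : ℝ) 1 ×ˢ Set.Icc (0 : ℝ) 1)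

/-- Lebesgue measure restricted to the unit interval `[0,1]`. -/
noncomputable def unitInt : Measure ℝ := volume.restrict (Set.Icc (0 : ℝ) 1)

/-- A graphon: a measurable function with values in `[0,1]` which is symmetric
almost everywhere on `[0,1]²`. -/
def IsGraphon (W : ℝ → ℝ → ℝ) : Prop :=
  Measurable (Function.uncurry W) ∧ (∀ x y, W x y ∈ Set.Icc (0 : ℝ) 1) ∧
    (∀ᵐ p : ℝ × ℝ ∂unitSq, W p.1 p.2 = W p.2 p.1)

/-- A unit function of `L²[0,1]`: measurable with `∫₀¹ f² = 1`. -/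
def IsUnitL2 (f : ℝ → ℝ) : Prop :=
  Measurable f ∧ (∫ x in Set.Icc (0 : ℝ) 1, (f x) ^ 2) = 1

/-- The quadratic form `∫₀¹∫₀¹ W(x,y) f(x) f(y) dx dy`. -/
noncomputable def quadForm (W : ℝ → ℝ → ℝ) (f : ℝ → ℝ) : ℝ :=
  ∫ x in Set.Icc (0 : ℝ) 1, ∫ y in Set.Icc (0 : ℝ) 1, W x y * f x * f y

/-- `μ(W)`, the maximum eigenvalue of the kernel operator associated to `W`. -/
noncomputable def graphonMu (W : ℝ → ℝ → ℝ) : ℝ :=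
  sSup {r : ℝ | ∃ f : ℝ → ℝ, IsUnitL2 f ∧ r = quadForm W f}

/-- `ν(W)`, the minimum eigenvalue of the kernel operator associated to `W`. -/
noncomputable def graphonNu (W : ℝ → ℝ → ℝ) : ℝ :=
  sInf {r : ℝ | ∃ f : ℝ → ℝ, IsUnitL2 f ∧ r = quadForm W f}

/-- The spread `spr(W) = μ(W) − ν(W)` of a graphon. -/
noncomputable def graphonSpr (W : ℝ → ℝ → ℝ) : ℝ := graphonMu W - graphonNu W

/-- `f` is a `lam`-eigenfunction of the kernel operator of `W`. -/
def IsEigenfunction (W : ℝ → ℝ → ℝ) (lam : ℝ) (f : ℝ → ℝ) : Prop :=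
  ∀ᵐ x ∂unitInt, (∫ y in Set.Icc (0 : ℝ) 1, W x y * f y) = lam * f x

/-! ### Auxiliary material for the proof -/

local notation "I01" => Set.Icc (0 : ℝ) 1

namespace GraphonPF

lemma volume_I01 : volume I01 = 1 := by
  rw [Real.volume_Icc]; norm_num

instance : IsProbabilityMeasure unitInt := by
  constructor
  rw [unitInt, Measure.restrict_apply_univ, volume_I01]

lemma unitInt_prod : unitInt.prod unitInt = volume.restrict (I01 ×ˢ I01) := by
  rw [unitInt, Measure.prod_restrict, ← Measure.volume_eq_prod]

lemma integral_I01 {F : ℝ → ℝ} : (∫ x in I01, F x) = ∫ x, F x ∂unitInt := rfl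

lemma quadForm_eq (W : ℝ → ℝ → ℝ) (u : ℝ → ℝ) :
    quadForm W u = ∫ x, (∫ y, W x y * u x * u y ∂unitInt) ∂unitInt := rfl

/-- square-integrability of a unit function -/
lemma _root_.IsUnitL2.sq_int {f : ℝ → ℝ} (hf : IsUnitL2 f) :
    Integrable (fun x => f x ^ 2) unitInt := by
  by_contra h
  have h1 := integral_undef (μ := unitInt) (f := fun x => f x ^ 2) h
  have h2 := hf.2
  rw [integral_I01, h1] at h2
  norm_num at h2

lemma _root_.IsUnitL2.int {f : ℝ → ℝ} (hf : IsUnitL2 f) : Integrable f unitInt := by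
  have h2 : MemLp f 2 unitInt :=
    (memLp_two_iff_integrable_sq hf.1.aestronglyMeasurable).2 hf.sq_int
  exact h2.integrable (by norm_num)

lemma prod_integrable {W : ℝ → ℝ → ℝ} (hWm : Measurable (Function.uncurry W))
    (hW01 : ∀ x y, W x y ∈ Set.Icc (0 : ℝ) 1) {u v : ℝ → ℝ}
    (hu : Measurable u) (hv : Measurable v)
    (hui : Integrable u unitInt) (hvi : Integrable v unitInt) :
    Integrable (fun p : ℝ × ℝ => W p.1 p.2 * u p.1 * v p.2) (unitInt.prod unitInt) := by
  have hm : Measurable fun p : ℝ × ℝ => W p.1 p.2 * u p.1 * v p.2 :=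
    (hWm.mul (hu.comp measurable_fst)).mul (hv.comp measurable_snd)
  refine (hui.abs.mul_prod hvi.abs).mono' hm.aestronglyMeasurable ?_
  refine Filter.Eventually.of_forall fun p => ?_
  have h1 := hW01 p.1 p.2
  have hWa : |W p.1 p.2| ≤ 1 := abs_le.2 ⟨by linarith [h1.1], h1.2⟩
  have h2 := abs_nonneg (u p.1)
  have h3 := abs_nonneg (v p.2)
  calc ‖W p.1 p.2 * u p.1 * v p.2‖ = |W p.1 p.2| * |u p.1| * |v p.2| := by
        rw [Real.norm_eq_abs, abs_mul, abs_mul]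
    _ ≤ 1 * |u p.1| * |v p.2| := by
        exact mul_le_mul_of_nonneg_right (mul_le_mul_of_nonneg_right hWa h2) h3
    _ = |u p.1| * |v p.2| := by ring

lemma quadForm_eq_prod {W : ℝ → ℝ → ℝ} (hWm : Measurable (Function.uncurry W))
    (hW01 : ∀ x y, W x y ∈ Set.Icc (0 : ℝ) 1) {u : ℝ → ℝ}
    (hu : Measurable u) (hui : Integrable u unitInt) :
    quadForm W u = ∫ p, W p.1 p.2 * u p.1 * u p.2 ∂(unitInt.prod unitInt) := by
  rw [quadForm_eq]
  exact integral_integral (f := fun x y => W x y * u x * u y)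
    (prod_integrable hWm hW01 hu hu hui hui)

lemma sq_integral_le {u : ℝ → ℝ} (h1 : Integrable u unitInt)
    (h2 : Integrable (fun x => u x ^ 2) unitInt) :
    (∫ x, u x ∂unitInt) ^ 2 ≤ ∫ x, u x ^ 2 ∂unitInt := by
  set c := ∫ x, u x ∂unitInt with hc
  have h0 : 0 ≤ ∫ x, (u x - c) ^ 2 ∂unitInt := integral_nonneg fun x => sq_nonneg _
  have hg : Integrable (fun x => (-(2 * c)) * u x + c ^ 2) unitInt :=
    (h1.const_mul _).add (integrable_const _)
  have hexp : ∫ x, (u x - c) ^ 2 ∂unitInt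
      = (∫ x, u x ^ 2 ∂unitInt) - 2 * c * c + c ^ 2 := by
    have he : ∀ x, (u x - c) ^ 2 = u x ^ 2 + ((-(2 * c)) * u x + c ^ 2) := by
      intro x; ring
    calc ∫ x, (u x - c) ^ 2 ∂unitInt
        = ∫ x, (u x ^ 2 + ((-(2 * c)) * u x + c ^ 2)) ∂unitInt := by
          exact integral_congr_ae (Filter.Eventually.of_forall fun x => he x)
      _ = (∫ x, u x ^ 2 ∂unitInt) + ∫ x, ((-(2 * c)) * u x + c ^ 2) ∂unitInt :=
          integral_add h2 hg
      _ = (∫ x, u x ^ 2 ∂unitInt) + ((-(2 * c)) * (∫ x, u x ∂unitInt) + c ^ 2) := by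
          rw [integral_add (h1.const_mul _) (integrable_const _), integral_const_mul,
            integral_const]
          simp
      _ = (∫ x, u x ^ 2 ∂unitInt) - 2 * c * c + c ^ 2 := by rw [← hc]; ring
  nlinarith [h0, hexp]

lemma quadForm_le_one {W : ℝ → ℝ → ℝ} (hWm : Measurable (Function.uncurry W))
    (hW01 : ∀ x y, W x y ∈ Set.Icc (0 : ℝ) 1) {u : ℝ → ℝ} (hu : IsUnitL2 u) :
    quadForm W u ≤ 1 := by
  have hui := hu.int
  have h1 : quadForm W u ≤ ∫ p, |u p.1| * |u p.2| ∂(unitInt.prod unitInt) := by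
    rw [quadForm_eq_prod hWm hW01 hu.1 hui]
    refine integral_mono (prod_integrable hWm hW01 hu.1 hu.1 hui hui)
      (hui.abs.mul_prod hui.abs) fun p => ?_
    have h1 := hW01 p.1 p.2
    calc W p.1 p.2 * u p.1 * u p.2 ≤ |W p.1 p.2 * u p.1 * u p.2| := le_abs_self _
      _ = |W p.1 p.2| * (|u p.1| * |u p.2|) := by rw [abs_mul, abs_mul]; ring
      _ ≤ 1 * (|u p.1| * |u p.2|) := by
          have hWa : |W p.1 p.2| ≤ 1 := abs_le.2 ⟨by linarith [h1.1], h1.2⟩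
          have := mul_nonneg (abs_nonneg (u p.1)) (abs_nonneg (u p.2))
          nlinarith
      _ = |u p.1| * |u p.2| := one_mul _
  have h2 : (∫ p, |u p.1| * |u p.2| ∂(unitInt.prod unitInt))
      = (∫ x, |u x| ∂unitInt) * (∫ x, |u x| ∂unitInt) :=
      integral_prod_mul (L := ℝ) (f := fun x => |u x|) (g := fun x => |u x|)
  have habs : (fun x => |u x| ^ 2) = fun x => u x ^ 2 := by ext x; rw [sq_abs]
  have h3 : (∫ x, |u x| ∂unitInt) ^ 2 ≤ ∫ x, |u x| ^ 2 ∂unitInt := by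
    refine sq_integral_le hui.abs ?_
    rw [habs]; exact hu.sq_int
  have h4 : (∫ x, |u x| ^ 2 ∂unitInt) = 1 := by
    rw [habs, ← integral_I01, hu.2]
  nlinarith [h1, h2, h3, h4]

lemma bddAbove_quad {W : ℝ → ℝ → ℝ} (hWm : Measurable (Function.uncurry W))
    (hW01 : ∀ x y, W x y ∈ Set.Icc (0 : ℝ) 1) :
    BddAbove {r : ℝ | ∃ f : ℝ → ℝ, IsUnitL2 f ∧ r = quadForm W f} := by
  refine ⟨1, fun r hr => ?_⟩
  obtain ⟨f, hf, rfl⟩ := hr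
  exact quadForm_le_one hWm hW01 hf

lemma quadForm_le_mu {W : ℝ → ℝ → ℝ} (hWm : Measurable (Function.uncurry W))
    (hW01 : ∀ x y, W x y ∈ Set.Icc (0 : ℝ) 1) {u : ℝ → ℝ} (hu : IsUnitL2 u) :
    quadForm W u ≤ graphonMu W :=
  le_csSup (bddAbove_quad hWm hW01) ⟨u, hu, rfl⟩

lemma one_unit : IsUnitL2 (fun _ => (1 : ℝ)) := by
  refine ⟨measurable_const, ?_⟩
  rw [integral_I01]
  simp

end GraphonPF

set_option maxHeartbeats 2000000 in
open GraphonPF in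
/-- Perron–Frobenius for connected graphons: a unit eigenfunction for the top
eigenvalue `μ(W)` has constant sign almost everywhere. -/
theorem graphon_perron_frobenius (W : ℝ → ℝ → ℝ) (hW : IsGraphon W)
    (hconn : ¬ ∃ A : Set ℝ, MeasurableSet A ∧ A ⊆ Set.Icc (0 : ℝ) 1 ∧
      0 < volume A ∧ volume A < 1 ∧
      (∀ᵐ p : ℝ × ℝ ∂(volume.restrict (A ×ˢ (Set.Icc (0 : ℝ) 1 \ A))), W p.1 p.2 = 0))
    (f : ℝ → ℝ) (hf : IsUnitL2 f)
    (heig : IsEigenfunction W (graphonMu W) f) :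
    (∀ᵐ x ∂unitInt, 0 < f x) ∨ (∀ᵐ x ∂unitInt, f x < 0) := by
  obtain ⟨hWm, hW01, _hWsymm⟩ := hW
  set μ := graphonMu W with hμdef
  have hfint : Integrable f unitInt := hf.int
  -- the quadratic form of f equals μ
  have hfq : quadForm W f = μ := by
    have h1 : ∀ x : ℝ, (∫ y, W x y * f x * f y ∂unitInt)
        = f x * ∫ y, W x y * f y ∂unitInt := by
      intro x
      rw [← integral_const_mul]
      exact integral_congr_ae (Filter.Eventually.of_forall fun y => by ring)
    have heig' : ∀ᵐ x ∂unitInt, (∫ y, W x y * f y ∂unitInt) = μ * f x := heig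
    calc quadForm W f = ∫ x, f x * ∫ y, W x y * f y ∂unitInt ∂unitInt := by
          rw [quadForm_eq]; exact integral_congr_ae (Filter.Eventually.of_forall h1)
      _ = ∫ x, μ * f x ^ 2 ∂unitInt := by
          refine integral_congr_ae ?_
          filter_upwards [heig'] with x hx
          rw [hx]; ring
      _ = μ * ∫ x, f x ^ 2 ∂unitInt := integral_const_mul _ _
      _ = μ := by rw [← integral_I01, hf.2, mul_one]
  -- μ is positive (uses connectedness)
  have hμpos : 0 < μ := by
    have hWint : Integrable (fun p : ℝ × ℝ => W p.1 p.2) (unitInt.prod unitInt) := by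
      have h := prod_integrable hWm hW01 measurable_const measurable_const
        (integrable_const (1 : ℝ)) (integrable_const (1 : ℝ))
      simpa using h
    have hWnn : 0 ≤ᵐ[unitInt.prod unitInt] fun p : ℝ × ℝ => W p.1 p.2 :=
      Filter.Eventually.of_forall fun p => (hW01 _ _).1
    have hQ1 : quadForm W (fun _ => (1 : ℝ)) = ∫ p, W p.1 p.2 ∂(unitInt.prod unitInt) := by
      rw [quadForm_eq_prod hWm hW01 measurable_const (integrable_const 1)]
      simp
    have hpos : 0 < ∫ p, W p.1 p.2 ∂(unitInt.prod unitInt) := by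
      rcases (integral_nonneg_of_ae hWnn).lt_or_eq with h | h
      · exact h
      · exfalso
        have hz := (integral_eq_zero_iff_of_nonneg_ae hWnn hWint).1 h.symm
        have hz' : ∀ᵐ p : ℝ × ℝ ∂(unitInt.prod unitInt), W p.1 p.2 = 0 := by
          filter_upwards [hz] with p hp; exact hp
        refine hconn ⟨Set.Icc 0 (1/2), measurableSet_Icc,
          Set.Icc_subset_Icc le_rfl (by norm_num), ?_, ?_, ?_⟩
        · rw [Real.volume_Icc]; norm_num
        · rw [Real.volume_Icc]
          rw [show ((1:ℝ)/2 - 0) = 1/2 by norm_num]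
          rw [show (1 : ENNReal) = ENNReal.ofReal 1 by simp]
          exact (ENNReal.ofReal_lt_ofReal_iff_of_nonneg (by norm_num)).2 (by norm_num)
        · rw [unitInt_prod] at hz'
          exact ae_restrict_of_ae_restrict_of_subset
            (Set.prod_mono (Set.Icc_subset_Icc le_rfl (by norm_num)) Set.diff_subset) hz'
    calc (0:ℝ) < ∫ p, W p.1 p.2 ∂(unitInt.prod unitInt) := hpos
      _ = quadForm W (fun _ => (1:ℝ)) := hQ1.symm
      _ ≤ μ := quadForm_le_mu hWm hW01 one_unit
  -- |f|
  set g : ℝ → ℝ := fun x => |f x| with hgdef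
  have hgmeas : Measurable g := hf.1.abs
  have hgnn : ∀ x, 0 ≤ g x := fun x => abs_nonneg _
  have hgunit : IsUnitL2 g := by
    refine ⟨hgmeas, ?_⟩
    have : ∀ x, g x ^ 2 = f x ^ 2 := fun x => sq_abs _
    rw [integral_I01, integral_congr_ae (Filter.Eventually.of_forall this), ← integral_I01,
      hf.2]
  have hgint : Integrable g unitInt := hgunit.int
  -- quadForm of g is also μ
  have hfg_le : quadForm W f ≤ quadForm W g := by
    rw [quadForm_eq_prod hWm hW01 hf.1 hfint, quadForm_eq_prod hWm hW01 hgmeas hgint]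
    refine integral_mono (prod_integrable hWm hW01 hf.1 hf.1 hfint hfint)
      (prod_integrable hWm hW01 hgmeas hgmeas hgint hgint) fun p => ?_
    have hw := (hW01 p.1 p.2).1
    have h2 : f p.1 * f p.2 ≤ |f p.1| * |f p.2| := by
      rw [← abs_mul]; exact le_abs_self _
    calc W p.1 p.2 * f p.1 * f p.2 = W p.1 p.2 * (f p.1 * f p.2) := by ring
      _ ≤ W p.1 p.2 * (|f p.1| * |f p.2|) := mul_le_mul_of_nonneg_left h2 hw
      _ = W p.1 p.2 * g p.1 * g p.2 := by rw [hgdef]; ring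
  have hgq : quadForm W g = μ :=
    le_antisymm (quadForm_le_mu hWm hW01 hgunit) (hfq ▸ hfg_le)
  -- a.e. equality of the integrands Wff and Wgg
  have hHint_f := prod_integrable hWm hW01 hf.1 hf.1 hfint hfint
  have hHint_g := prod_integrable hWm hW01 hgmeas hgmeas hgint hgint
  have hH : ∀ᵐ p : ℝ × ℝ ∂(unitInt.prod unitInt),
      W p.1 p.2 * f p.1 * f p.2 = W p.1 p.2 * g p.1 * g p.2 := by
    have hdiff_nn : 0 ≤ᵐ[unitInt.prod unitInt] fun p : ℝ × ℝ =>
        W p.1 p.2 * g p.1 * g p.2 - W p.1 p.2 * f p.1 * f p.2 := by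
      refine Filter.Eventually.of_forall fun p => ?_
      have hw := (hW01 p.1 p.2).1
      have h2 : f p.1 * f p.2 ≤ |f p.1| * |f p.2| := by
        rw [← abs_mul]; exact le_abs_self _
      have : W p.1 p.2 * (f p.1 * f p.2) ≤ W p.1 p.2 * (|f p.1| * |f p.2|) :=
        mul_le_mul_of_nonneg_left h2 hw
      simp only [Pi.zero_apply, hgdef]
      nlinarith [this]
    have hdiff_zero : ∫ p, (W p.1 p.2 * g p.1 * g p.2 - W p.1 p.2 * f p.1 * f p.2)
        ∂(unitInt.prod unitInt) = 0 := by
      rw [integral_sub hHint_g hHint_f, ← quadForm_eq_prod hWm hW01 hgmeas hgint,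
        ← quadForm_eq_prod hWm hW01 hf.1 hfint, hgq, hfq, sub_self]
    have := (integral_eq_zero_iff_of_nonneg_ae hdiff_nn (hHint_g.sub hHint_f)).1 hdiff_zero
    filter_upwards [this] with p hp
    have hp' : W p.1 p.2 * g p.1 * g p.2 - W p.1 p.2 * f p.1 * f p.2 = 0 := hp
    linarith
  -- The zero set of f inside [0,1]
  set Z : Set ℝ := {x | f x = 0} ∩ I01 with hZdef
  have hZmeas : MeasurableSet Z := (hf.1 (measurableSet_singleton 0)).inter measurableSet_Icc
  have hZsub : Z ⊆ I01 := Set.inter_subset_right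
  -- the operator applied to g
  set T : ℝ → ℝ := fun x => ∫ y, W x y * g y ∂unitInt with hTdef
  have hTnn : ∀ x, 0 ≤ T x := fun x =>
    integral_nonneg fun y => mul_nonneg (hW01 x y).1 (hgnn y)
  have hWg_prod : Integrable (fun p : ℝ × ℝ => W p.1 p.2 * g p.2) (unitInt.prod unitInt) := by
    have h := prod_integrable hWm hW01 measurable_const hgmeas (integrable_const (1:ℝ)) hgint
    simpa using h
  have hTint : Integrable T unitInt := by
    have h := hWg_prod.integral_prod_left
    exact h
  have hTy_int : ∀ x : ℝ, Integrable (fun y => W x y * g y) unitInt := by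
    intro x
    have hmx : Measurable fun y => W x y * g y :=
      ((hWm.comp (measurable_const.prodMk measurable_id)).mul hgmeas)
    refine hgint.abs.mono' hmx.aestronglyMeasurable (Filter.Eventually.of_forall fun y => ?_)
    have hw := hW01 x y
    have hWa : |W x y| ≤ 1 := abs_le.2 ⟨by linarith [hw.1], hw.2⟩
    rw [Real.norm_eq_abs, abs_mul]
    calc |W x y| * |g y| ≤ 1 * |g y| :=
          mul_le_mul_of_nonneg_right hWa (abs_nonneg _)
      _ = |g y| := one_mul _
  -- Step 1: the zero set of f has measure zero
  have hZzero : volume Z = 0 := by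
    by_contra hZne
    have hZpos : 0 < volume Z := pos_iff_ne_zero.mpr hZne
    have hZle : volume Z ≤ 1 := by
      calc volume Z ≤ volume I01 := measure_mono hZsub
        _ = 1 := volume_I01
    have hZlt : volume Z < 1 := by
      rcases hZle.lt_or_eq with h | h
      · exact h
      · exfalso
        have hdiffz : volume (I01 \ Z) = 0 := by
          have := measure_diff (μ := volume) hZsub hZmeas.nullMeasurableSet
            (by rw [h]; exact ENNReal.one_ne_top)
          rw [this, volume_I01, h, tsub_self]
        have hf0 : f =ᵐ[unitInt] 0 := by
          rw [Filter.EventuallyEq, ae_iff]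
          have hsub2 : {x | ¬ f x = (0:ℝ→ℝ) x} ∩ I01 ⊆ I01 \ Z := by
            intro x hx
            exact ⟨hx.2, fun hz => hx.1 hz.1⟩
          refine le_antisymm ?_ (zero_le)
          calc unitInt {x | ¬ f x = (0:ℝ→ℝ) x}
              = volume ({x | ¬ f x = (0:ℝ→ℝ) x} ∩ I01) := by
                rw [unitInt, Measure.restrict_apply' measurableSet_Icc]
            _ ≤ volume (I01 \ Z) := measure_mono hsub2
            _ = 0 := hdiffz
        have hzero : ∫ x, f x ^ 2 ∂unitInt = 0 := by
          have : (fun x => f x ^ 2) =ᵐ[unitInt] 0 := by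
            filter_upwards [hf0] with x hx
            simp only [Pi.zero_apply] at hx ⊢
            rw [hx]; ring
          rw [integral_congr_ae this]; simp
        rw [← integral_I01, hf.2] at hzero
        norm_num at hzero
    have hrr : unitInt.restrict Z = volume.restrict Z := by
      rw [unitInt, Measure.restrict_restrict hZmeas, Set.inter_eq_self_of_subset_left hZsub]
    set c := ∫ x in Z, T x ∂unitInt with hcdef
    have hcnn : 0 ≤ c := integral_nonneg fun x => hTnn x
    rcases hcnn.lt_or_eq with hcpos | hc0
    · -- c > 0 : build a better competitor, contradiction with maximality of μ
      set m := (volume Z).toReal with hmdef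
      have hmpos : 0 < m := ENNReal.toReal_pos hZne (by
        exact ne_top_of_lt (lt_of_lt_of_le hZlt le_top))
      set ε := c / (2 * μ * m) with hεdef
      have hεpos : 0 < ε := div_pos hcpos (by positivity)
      set h : ℝ → ℝ := Z.indicator (fun _ => (1:ℝ)) with hhdef
      have hhmeas : Measurable h := measurable_const.indicator hZmeas
      have hhint : Integrable h unitInt := (integrable_const (1:ℝ)).indicator hZmeas
      have hhnn : ∀ x, 0 ≤ h x := fun x => Set.indicator_nonneg (fun _ _ => zero_le_one) x
      have hgh : ∀ x, g x * h x = 0 := by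
        intro x
        by_cases hx : x ∈ Z
        · have hfx : f x = 0 := hx.1
          simp [hgdef, hfx]
        · simp [hhdef, Set.indicator_of_notMem hx]
      have hsqh : ∀ x, h x ^ 2 = h x := by
        intro x
        by_cases hx : x ∈ Z <;> simp [hhdef, hx]
      have hhsqint : Integrable (fun x => h x ^ 2) unitInt := by
        have : (fun x => h x ^ 2) = h := funext hsqh
        rw [this]; exact hhint
      have hmh : ∫ x, h x ∂unitInt = m := by
        rw [hhdef, integral_indicator hZmeas]
        rw [setIntegral_const]
        rw [show (unitInt.real Z) = (volume Z).toReal from by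
          rw [Measure.real, unitInt, Measure.restrict_apply' measurableSet_Icc,
            Set.inter_eq_self_of_subset_left hZsub]]
        rw [smul_eq_mul, mul_one, hmdef]
      set u : ℝ → ℝ := fun x => g x + ε * h x with hudef
      have humeas : Measurable u := hgmeas.add (hhmeas.const_mul ε)
      have huint : Integrable u unitInt := hgint.add (hhint.const_mul ε)
      set nrm := 1 + ε ^ 2 * m with hnrmdef
      have hnrmpos : 0 < nrm := by positivity
      have husq : ∫ x, u x ^ 2 ∂unitInt = nrm := by
        have hpt : ∀ x, u x ^ 2 = g x ^ 2 + ε ^ 2 * h x ^ 2 := by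
          intro x
          have h0 := hgh x
          have h1 : u x ^ 2 = g x ^ 2 + ε ^ 2 * h x ^ 2 + 2 * ε * (g x * h x) := by
            simp only [hudef]; ring
          rw [h1, h0]; ring
        rw [integral_congr_ae (Filter.Eventually.of_forall hpt),
          integral_add hgunit.sq_int (hhsqint.const_mul _), integral_const_mul]
        have h2 : ∫ x, h x ^ 2 ∂unitInt = m := by
          rw [integral_congr_ae (Filter.Eventually.of_forall fun x => congrFun (funext hsqh) x)]
          exact hmh
        have h3 : ∫ x, g x ^ 2 ∂unitInt = 1 := by rw [← integral_I01]; exact hgunit.2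
        rw [h2, h3, hnrmdef]
      set a := (Real.sqrt nrm)⁻¹ with hadef
      have hasq : a ^ 2 = nrm⁻¹ := by
        rw [hadef, inv_pow, Real.sq_sqrt hnrmpos.le]
      have hapos : 0 < a := by
        rw [hadef]; exact inv_pos.2 (Real.sqrt_pos.2 hnrmpos)
      set v : ℝ → ℝ := fun x => a * u x with hvdef
      have hvunit : IsUnitL2 v := by
        refine ⟨humeas.const_mul a, ?_⟩
        rw [integral_I01]
        have hpt : ∀ x, v x ^ 2 = a ^ 2 * u x ^ 2 := fun x => by
          simp only [hvdef]; ring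
        rw [integral_congr_ae (Filter.Eventually.of_forall hpt), integral_const_mul, husq,
          hasq, inv_mul_cancel₀ hnrmpos.ne']
      -- the four pieces of the quadratic form of u
      set Qgh := ∫ p, W p.1 p.2 * g p.1 * h p.2 ∂(unitInt.prod unitInt) with hQghdef
      set Qhg := ∫ p, W p.1 p.2 * h p.1 * g p.2 ∂(unitInt.prod unitInt) with hQhgdef
      set Qhh := ∫ p, W p.1 p.2 * h p.1 * h p.2 ∂(unitInt.prod unitInt) with hQhhdef
      have hQgh_nn : 0 ≤ Qgh := integral_nonneg fun p =>
        mul_nonneg (mul_nonneg (hW01 _ _).1 (hgnn _)) (hhnn _)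
      have hQhh_nn : 0 ≤ Qhh := integral_nonneg fun p =>
        mul_nonneg (mul_nonneg (hW01 _ _).1 (hhnn _)) (hhnn _)
      have hQhg_eq : Qhg = c := by
        have hii := integral_integral (f := fun x y => W x y * h x * g y)
          (prod_integrable hWm hW01 hhmeas hgmeas hhint hgint)
        rw [hQhgdef, ← hii]
        have hin : ∀ x, ∫ y, W x y * h x * g y ∂unitInt = h x * T x := by
          intro x
          rw [hTdef, ← integral_const_mul]
          exact integral_congr_ae (Filter.Eventually.of_forall fun y => by ring)
        rw [integral_congr_ae (Filter.Eventually.of_forall hin)]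
        have hin2 : ∀ x, h x * T x = Z.indicator T x := by
          intro x
          by_cases hx : x ∈ Z <;> simp [hhdef, hx]
        rw [integral_congr_ae (Filter.Eventually.of_forall hin2), integral_indicator hZmeas,
          hcdef]
      -- expansion of the quadratic form of u
      have i1 := prod_integrable hWm hW01 hgmeas hgmeas hgint hgint
      have i2 : Integrable (fun p : ℝ × ℝ => ε * (W p.1 p.2 * g p.1 * h p.2))
          (unitInt.prod unitInt) :=
        (prod_integrable hWm hW01 hgmeas hhmeas hgint hhint).const_mul ε
      have i3 : Integrable (fun p : ℝ × ℝ => ε * (W p.1 p.2 * h p.1 * g p.2))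
          (unitInt.prod unitInt) :=
        (prod_integrable hWm hW01 hhmeas hgmeas hhint hgint).const_mul ε
      have i4 : Integrable (fun p : ℝ × ℝ => ε ^ 2 * (W p.1 p.2 * h p.1 * h p.2))
          (unitInt.prod unitInt) :=
        (prod_integrable hWm hW01 hhmeas hhmeas hhint hhint).const_mul (ε ^ 2)
      have i12 : Integrable (fun p : ℝ × ℝ => W p.1 p.2 * g p.1 * g p.2
          + ε * (W p.1 p.2 * g p.1 * h p.2)) (unitInt.prod unitInt) := i1.add i2
      have i123 : Integrable (fun p : ℝ × ℝ => W p.1 p.2 * g p.1 * g p.2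
          + ε * (W p.1 p.2 * g p.1 * h p.2) + ε * (W p.1 p.2 * h p.1 * g p.2))
          (unitInt.prod unitInt) := i12.add i3
      have hexp : ∫ p, W p.1 p.2 * u p.1 * u p.2 ∂(unitInt.prod unitInt)
          = μ + ε * Qgh + ε * Qhg + ε ^ 2 * Qhh := by
        have hpt : ∀ p : ℝ × ℝ, W p.1 p.2 * u p.1 * u p.2
            = W p.1 p.2 * g p.1 * g p.2 + ε * (W p.1 p.2 * g p.1 * h p.2)
              + ε * (W p.1 p.2 * h p.1 * g p.2) + ε ^ 2 * (W p.1 p.2 * h p.1 * h p.2) := by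
          intro p; simp only [hudef]; ring
        rw [integral_congr_ae (Filter.Eventually.of_forall hpt)]
        rw [integral_add i123 i4, integral_add i12 i3, integral_add i1 i2,
          integral_const_mul, integral_const_mul, integral_const_mul]
        rw [← quadForm_eq_prod hWm hW01 hgmeas hgint, hgq]
      have hQuu_ge : μ + ε * c ≤ ∫ p, W p.1 p.2 * u p.1 * u p.2 ∂(unitInt.prod unitInt) := by
        rw [hexp, ← hQhg_eq]
        nlinarith [hQgh_nn, hQhh_nn, hεpos, sq_nonneg ε]
      have hvq_le : quadForm W v ≤ μ := quadForm_le_mu hWm hW01 hvunit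
      have hvq_eq : quadForm W v
          = a ^ 2 * ∫ p, W p.1 p.2 * u p.1 * u p.2 ∂(unitInt.prod unitInt) := by
        rw [quadForm_eq_prod hWm hW01 (humeas.const_mul a) (huint.const_mul a),
          ← integral_const_mul]
        exact integral_congr_ae (Filter.Eventually.of_forall fun p => by
          simp only [hvdef]; ring)
      have hcontr : μ + ε * c ≤ nrm * μ := by
        have h5 : a ^ 2 * (μ + ε * c)
            ≤ a ^ 2 * ∫ p, W p.1 p.2 * u p.1 * u p.2 ∂(unitInt.prod unitInt) :=
          mul_le_mul_of_nonneg_left hQuu_ge (sq_nonneg a)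
        have h6 : a ^ 2 * (μ + ε * c) ≤ μ := le_trans h5 (hvq_eq ▸ hvq_le)
        have h7 : a ^ 2 = nrm⁻¹ := hasq
        calc μ + ε * c = nrm * (a ^ 2 * (μ + ε * c)) := by
              rw [h7]; field_simp
          _ ≤ nrm * μ := mul_le_mul_of_nonneg_left h6 hnrmpos.le
      have hkey : ε * c ≤ μ * ε ^ 2 * m := by
        rw [hnrmdef] at hcontr; nlinarith [hcontr]
      have hc_le : c ≤ μ * ε * m := by
        have : ε * c ≤ ε * (μ * ε * m) := by nlinarith [hkey]
        exact le_of_mul_le_mul_left this hεpos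
      have hμεm : μ * ε * m = c / 2 := by
        rw [hεdef]; field_simp
      rw [hμεm] at hc_le
      linarith
    · -- c = 0 : Z disconnects the graphon
      have hT0 : ∀ᵐ x ∂(volume.restrict Z), T x = 0 := by
        have hnn : 0 ≤ᵐ[unitInt.restrict Z] T := Filter.Eventually.of_forall hTnn
        have hint : Integrable T (unitInt.restrict Z) := hTint.restrict
        have h0 := (integral_eq_zero_iff_of_nonneg_ae hnn hint).1 hc0.symm
        rw [hrr] at h0
        filter_upwards [h0] with x hx; exact hx
      have hae : ∀ᵐ x ∂(volume.restrict Z), ∀ᵐ y ∂(volume.restrict (I01 \ Z)),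
          W x y = 0 := by
        filter_upwards [hT0] with x hx0
        have hnn : 0 ≤ᵐ[unitInt] fun y => W x y * g y :=
          Filter.Eventually.of_forall fun y => mul_nonneg (hW01 x y).1 (hgnn y)
        have hyae := (integral_eq_zero_iff_of_nonneg_ae hnn (hTy_int x)).1 hx0
        have hyae' : ∀ᵐ y ∂(volume.restrict I01), W x y * g y = 0 := by
          have : ∀ᵐ y ∂unitInt, W x y * g y = 0 := by
            filter_upwards [hyae] with y hy; exact hy
          exact this
        have h' : ∀ᵐ y ∂(volume.restrict (I01 \ Z)), W x y * g y = 0 :=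
          ae_restrict_of_ae_restrict_of_subset Set.diff_subset hyae'
        filter_upwards [h', ae_restrict_mem (measurableSet_Icc.diff hZmeas)] with y h1 h2
        have hfy : f y ≠ 0 := fun h0 => h2.2 ⟨h0, h2.1⟩
        have hgy : g y ≠ 0 := by
          simp only [hgdef]
          exact fun h0 => hfy (abs_eq_zero.mp h0)
        exact (mul_eq_zero.mp h1).resolve_right hgy
      have hfinal : ∀ᵐ p : ℝ × ℝ ∂(volume.restrict (Z ×ˢ (I01 \ Z))), W p.1 p.2 = 0 := by
        have hms : MeasurableSet {p : ℝ × ℝ | W p.1 p.2 = 0} :=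
          hWm (measurableSet_singleton 0)
        have hprodeq : volume.restrict (Z ×ˢ (I01 \ Z))
            = (volume.restrict Z).prod (volume.restrict (I01 \ Z)) := by
          rw [Measure.prod_restrict, ← Measure.volume_eq_prod]
        rw [hprodeq]
        exact (Measure.ae_prod_iff_ae_ae hms).2 hae
      exact hconn ⟨Z, hZmeas, hZsub, hZpos, hZlt, hfinal⟩
  -- Step 2: positive and negative parts cannot both have positive measure
  set P : Set ℝ := {x | 0 < f x} ∩ I01 with hPdef
  set N : Set ℝ := {x | f x < 0} ∩ I01 with hNdef
  have hPmeas : MeasurableSet P :=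
    (measurableSet_lt measurable_const hf.1).inter measurableSet_Icc
  have hNmeas : MeasurableSet N :=
    (measurableSet_lt hf.1 measurable_const).inter measurableSet_Icc
  have hdisconn : ∀ A : Set ℝ, MeasurableSet A → A ⊆ I01 → volume A ≠ 0 →
      volume (I01 \ A) ≠ 0 →
      (∀ᵐ p : ℝ × ℝ ∂(volume.restrict (A ×ˢ (I01 \ A))), W p.1 p.2 = 0) → False := by
    intro A hA hAsub hA0 hAc0 hae
    refine hconn ⟨A, hA, hAsub, pos_iff_ne_zero.mpr hA0, ?_, hae⟩
    by_contra hge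
    push_neg at hge
    have hle : volume A ≤ 1 := le_trans (measure_mono hAsub) volume_I01.le
    have heq : volume A = 1 := le_antisymm hle hge
    have : volume (I01 \ A) = 0 := by
      have := measure_diff (μ := volume) hAsub hA.nullMeasurableSet
        (by rw [heq]; exact ENNReal.one_ne_top)
      rw [this, volume_I01, heq, tsub_self]
    exact hAc0 this
  -- a.e. points of the square where both coordinates are nonzero
  have hPN : volume P = 0 ∨ volume N = 0 := by
    by_contra hboth
    push_neg at hboth
    obtain ⟨hP0, hN0⟩ := hboth
    -- N has positive measure, so I01 \ P has positive measure
    have hNsubPc : N ⊆ I01 \ P := by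
      intro x hx
      refine ⟨hx.2, fun hp => ?_⟩
      have h1 : f x < 0 := hx.1
      have h2 : 0 < f x := hp.1
      linarith
    have hPc0 : volume (I01 \ P) ≠ 0 := fun h0 =>
      hN0 (measure_mono_null hNsubPc h0)
    refine hdisconn P hPmeas Set.inter_subset_right hP0 hPc0 ?_
    -- transfer the a.e. identity Wff = Wgg
    have hsubsq : P ×ˢ (I01 \ P) ⊆ I01 ×ˢ I01 :=
      Set.prod_mono Set.inter_subset_right Set.diff_subset
    have hae1 : ∀ᵐ p : ℝ × ℝ ∂(volume.restrict (P ×ˢ (I01 \ P))),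
        W p.1 p.2 * f p.1 * f p.2 = W p.1 p.2 * g p.1 * g p.2 := by
      rw [unitInt_prod] at hH
      exact ae_restrict_of_ae_restrict_of_subset hsubsq hH
    have hae2 : ∀ᵐ p : ℝ × ℝ ∂(volume.restrict (P ×ˢ (I01 \ P))),
        p ∈ P ×ˢ (I01 \ P) :=
      ae_restrict_mem (hPmeas.prod (measurableSet_Icc.diff hPmeas))
    have hae3 : ∀ᵐ p : ℝ × ℝ ∂(volume.restrict (P ×ˢ (I01 \ P))), f p.2 ≠ 0 := by
      rw [ae_iff]
      rw [Measure.restrict_apply' ((hPmeas.prod (measurableSet_Icc.diff hPmeas)))]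
      refine measure_mono_null (fun p hp => ?_) (show volume (Set.univ ×ˢ Z) = 0 from ?_)
      · have h2 : f p.2 = 0 := not_not.mp hp.1
        exact ⟨trivial, h2, hp.2.2.1⟩
      · rw [Measure.volume_eq_prod, Measure.prod_prod, hZzero, mul_zero]
    filter_upwards [hae1, hae2, hae3] with p h1 h2 h3
    have hp1 : 0 < f p.1 := h2.1.1
    have hp2 : f p.2 < 0 := by
      have hle : f p.2 ≤ 0 := by
        by_contra hpos
        push_neg at hpos
        exact h2.2.2 ⟨hpos, h2.2.1⟩
      exact lt_of_le_of_ne hle h3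
    have hg1 : g p.1 = f p.1 := abs_of_pos hp1
    have hg2 : g p.2 = -f p.2 := abs_of_neg hp2
    rw [hg1, hg2] at h1
    have h0 : W p.1 p.2 * f p.1 * f p.2 = 0 := by nlinarith [h1]
    have hW0 : W p.1 p.2 * f p.1 = 0 := by
      rcases mul_eq_zero.mp h0 with h | h
      · exact h
      · exact absurd h hp2.ne
    rcases mul_eq_zero.mp hW0 with h | h
    · exact h
    · exact absurd h hp1.ne'
  -- Conclusion
  rcases hPN with hP | hN
  · right
    rw [ae_iff]
    rw [show unitInt {a | ¬ f a < 0} = volume ({a | ¬ f a < 0} ∩ I01) from by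
      rw [unitInt, Measure.restrict_apply' measurableSet_Icc]]
    refine measure_mono_null (fun x hx => ?_) (measure_union_null hP hZzero)
    rcases lt_trichotomy (f x) 0 with h | h | h
    · exact absurd h hx.1
    · exact Or.inr ⟨h, hx.2⟩
    · exact Or.inl ⟨h, hx.2⟩
  · left
    rw [ae_iff]
    rw [show unitInt {a | ¬ 0 < f a} = volume ({a | ¬ 0 < f a} ∩ I01) from by
      rw [unitInt, Measure.restrict_apply' measurableSet_Icc]]
    refine measure_mono_null (fun x hx => ?_) (measure_union_null hN hZzero)
    rcases lt_trichotomy (f x) 0 with h | h | h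
    · exact Or.inl ⟨h, hx.2⟩
    · exact Or.inr ⟨h, hx.2⟩
    · exact absurd h hx.1
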